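/- Let A, B be the 2-D Euler flux Jacobians at a uniform supersonic state with Mach number M = ‖U‖/c > 1, velocity U = ‖U‖(cos α, sin α), and let μ = arcsin(1/M). Then the angles ζ for which det(sin(ζ)A − cos(ζ)B) = 0 are exactly ζ ∈ {α, α+π, α−μ, α−μ+π, α+μ, α+μ+π} (modulo 2π). -/
import Mathlib


/-- The 2-D Euler flux Jacobian in the direction `(nx, ny)`:  `An γ u v H nx ny = nx • A + ny • B`,
where `A`, `B` are the Jacobians of the Euler fluxes w.r.t. conservative variables. -/
noncomputable def An (γ u v H nx ny : ℝ) : Matrix (Fin 4) (Fin 4) ℝ :=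
  !![0, nx, ny, 0;
     (γ-1)*((u^2+v^2)/2)*nx - u*(u*nx+v*ny), (u*nx+v*ny)-(γ-2)*u*nx, u*ny-(γ-1)*v*nx, (γ-1)*nx;
     (γ-1)*((u^2+v^2)/2)*ny - v*(u*nx+v*ny), v*nx-(γ-1)*u*ny, (u*nx+v*ny)-(γ-2)*v*ny, (γ-1)*ny;
     ((γ-1)*((u^2+v^2)/2)-H)*(u*nx+v*ny), H*nx-(γ-1)*u*(u*nx+v*ny), H*ny-(γ-1)*v*(u*nx+v*ny), γ*(u*nx+v*ny)]

open Real

set_option maxHeartbeats 1000000 in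
lemma det_An (γ u v H nx ny : ℝ) :
    (An γ u v H nx ny).det =
      (u*nx+v*ny)^2 * ((u*nx+v*ny)^2 - ((γ-1)*(H-(u^2+v^2)/2))*(nx^2+ny^2)) := by
  rw [show (An γ u v H nx ny).det
      = ∑ j : Fin 4, (-1)^(j:ℕ) * An γ u v H nx ny 0 j *
          ((An γ u v H nx ny).submatrix Fin.succ j.succAbove).det from
    Matrix.det_succ_row_zero _]
  simp [Fin.sum_univ_succ, Matrix.det_fin_three, An, Fin.succAbove, Matrix.submatrix_apply]
  ring

lemma comb_An (γ u v H ζ : ℝ) :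
    (Real.sin ζ) • (An γ u v H 1 0) - (Real.cos ζ) • (An γ u v H 0 1)
      = An γ u v H (Real.sin ζ) (-Real.cos ζ) := by
  ext i j
  fin_cases i <;> fin_cases j <;> simp [An] <;> ring

/-- For a uniform supersonic state with Mach number , flow angle  and Mach
angle , the angles  for which  are
exactly  modulo . -/
theorem supersonic_characteristic_angles (γ c M α μ ζ u v H : ℝ)
    (hγ : 1 < γ) (hc : 0 < c) (hM : 1 < M)
    (hu : u = M * c * Real.cos α) (hv : v = M * c * Real.sin α)
    (hμ : μ = Real.arcsin (1 / M))
    (hH : H = c^2/(γ-1) + (u^2+v^2)/2) :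
    ((Real.sin ζ) • (An γ u v H 1 0) - (Real.cos ζ) • (An γ u v H 0 1)).det = 0 ↔
      ∃ k : ℤ, ζ = α + 2*k*Real.pi ∨ ζ = α + Real.pi + 2*k*Real.pi ∨
        ζ = α - μ + 2*k*Real.pi ∨ ζ = α - μ + Real.pi + 2*k*Real.pi ∨
        ζ = α + μ + 2*k*Real.pi ∨ ζ = α + μ + Real.pi + 2*k*Real.pi := by
  have hc' : c ≠ 0 := ne_of_gt hc
  have hM0 : (0:ℝ) < M := lt_trans one_pos hM
  have hM' : M ≠ 0 := ne_of_gt hM0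
  have hγ1 : γ - 1 ≠ 0 := sub_ne_zero.mpr (ne_of_gt hγ)
  rw [comb_An, det_An]
  have hun : u * Real.sin ζ + v * -Real.cos ζ = M * c * Real.sin (ζ - α) := by
    rw [hu, hv, Real.sin_sub]; ring
  have hnn : (Real.sin ζ)^2 + (-Real.cos ζ)^2 = 1 := by
    rw [neg_pow]; simpa using Real.sin_sq_add_cos_sq ζ
  have hcsq : (γ-1)*(H-(u^2+v^2)/2) = c^2 := by rw [hH]; field_simp; ring
  rw [hun, hnn, hcsq, mul_one]
  set s := Real.sin (ζ - α) with hs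
  have hsinμ : Real.sin μ = 1/M := by
    rw [hμ, Real.sin_arcsin]
    · have : (0:ℝ) < 1/M := by positivity
      linarith
    · rw [div_le_one hM0]; linarith
  have key : (M*c*s)^2 * ((M*c*s)^2 - c^2) = 0 ↔ (s = 0 ∨ s = 1/M ∨ s = -(1/M)) := by
    constructor
    · intro h
      rcases mul_eq_zero.mp h with h | h
      · left
        have h0 : M * c * s = 0 := by
          have := sq_eq_zero_iff.mp h
          exact this
        rcases mul_eq_zero.mp h0 with h1 | h1
        · exact absurd h1 (mul_ne_zero hM' hc')
        · exact h1
      · right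
        have h2 : (M*s - 1) * (M*s + 1) = 0 := by
          have hc2 : (0:ℝ) < c^2 := by positivity
          nlinarith [h]
        rcases mul_eq_zero.mp h2 with h3 | h3
        · left; field_simp; linarith
        · right; field_simp; linarith
    · rintro (h | h | h) <;> rw [h] <;> field_simp <;> ring
  rw [key]
  constructor
  · rintro (h | h | h)
    · rcases Real.sin_eq_zero_iff.mp h with ⟨n, hn⟩
      rcases Int.even_or_odd n with ⟨k, hk⟩ | ⟨k, hk⟩
      · refine ⟨k, Or.inl ?_⟩
        rw [hk] at hn; push_cast at hn; linarith
      · refine ⟨k, Or.inr (Or.inl ?_)⟩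
        rw [hk] at hn; push_cast at hn; linarith
    · have h' : Real.sin μ = Real.sin (ζ - α) := by rw [hsinμ, ← h]
      rcases Real.sin_eq_sin_iff.mp h' with ⟨k, hk | hk⟩
      · exact ⟨k, Or.inr (Or.inr (Or.inr (Or.inr (Or.inl (by push_cast at hk; linarith)))))⟩
      · exact ⟨k, Or.inr (Or.inr (Or.inr (Or.inl (by linear_combination hk))))⟩
    · have h' : Real.sin (-μ) = Real.sin (ζ - α) := by rw [Real.sin_neg, hsinμ, ← h]
      rcases Real.sin_eq_sin_iff.mp h' with ⟨k, hk | hk⟩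
      · exact ⟨k, Or.inr (Or.inr (Or.inl (by push_cast at hk; linarith)))⟩
      · exact ⟨k, Or.inr (Or.inr (Or.inr (Or.inr (Or.inr (by linear_combination hk)))))⟩
  · rintro ⟨k, h | h | h | h | h | h⟩
    · left
      exact Real.sin_eq_zero_iff.mpr ⟨2*k, by rw [h]; push_cast; ring⟩
    · left
      exact Real.sin_eq_zero_iff.mpr ⟨2*k+1, by rw [h]; push_cast; ring⟩
    · right; right
      have : Real.sin (-μ) = Real.sin (ζ - α) :=
        Real.sin_eq_sin_iff.mpr ⟨k, Or.inl (by rw [h]; push_cast; ring)⟩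
      rw [hs, ← this, Real.sin_neg, hsinμ]
    · right; left
      have : Real.sin μ = Real.sin (ζ - α) :=
        Real.sin_eq_sin_iff.mpr ⟨k, Or.inr (by rw [h]; push_cast; ring)⟩
      rw [hs, ← this, hsinμ]
    · right; left
      have : Real.sin μ = Real.sin (ζ - α) :=
        Real.sin_eq_sin_iff.mpr ⟨k, Or.inl (by rw [h]; push_cast; ring)⟩
      rw [hs, ← this, hsinμ]
    · right; right
      have : Real.sin (-μ) = Real.sin (ζ - α) :=
        Real.sin_eq_sin_iff.mpr ⟨k, Or.inr (by rw [h]; push_cast; ring)⟩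
      rw [hs, ← this, Real.sin_neg, hsinμ]
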